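/- arXiv:2002.00447 — 4 statements merged into one kernel-verified Lean document; each statement's English description precedes it below -/
import Mathlib

section
/- Let N be a positive integer, let q ∈ ℂ with 0 < |q| < 1, let t, a ∈ ℂ with |t| < 1 and a·q^k ≠ 1 for every integer k ≥ 0, and let (g_n)_{n≥0} be a sequence of complex numbers with ∑_{n=0}^∞ |g_n| < ∞; write G(z) = ∑_{m=0}^∞ g_m z^m. Then ∑_{n=0}^∞ g_n · [ ((aq^N;q)_n (t;q)_n) / ((tq^N;q)_n (a;q)_n) − (t;q)_N/(a;q)_N ] = ((t;q)_N/(a;q)_N) · ∑_{n=1}^∞ ( ∑_{k=0}^{n} [n k]_q · a^k q^{Nk} t^{n−k} · (q^{−N};q)_k · (q^{N};q)_{n−k} ) · G(q^n) / (q;q)_n. -/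
/-- Finite q-Pochhammer symbol `(x;q)_n = ∏_{k=0}^{n-1} (1 - x q^k)`. -/
noncomputable def qPoch (x q : ℂ) (n : ℕ) : ℂ := ∏ k ∈ Finset.range n, (1 - x * q ^ k)

/-- Infinite q-Pochhammer symbol `(x;q)_∞ = ∏_{k=0}^{∞} (1 - x q^k)`. -/
noncomputable def qPochInf (x q : ℂ) : ℂ := ∏' k : ℕ, (1 - x * q ^ k)

/-- Gaussian binomial coefficient `[n k]_q`, equal to `0` for `k > n`. -/
noncomputable def gbinom (q : ℂ) (n k : ℕ) : ℂ :=
  if k ≤ n then qPoch q q n / (qPoch q q k * qPoch q q (n - k)) else 0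

open Finset Filter

lemma qPoch_succ (x q : ℂ) (n : ℕ) :
    qPoch x q (n + 1) = qPoch x q n * (1 - x * q ^ n) := Finset.prod_range_succ _ _

lemma qPoch_peel (x q : ℂ) (n : ℕ) :
    qPoch x q (n + 1) = (1 - x) * qPoch (x * q) q n := by
  rw [qPoch, Finset.prod_range_succ']
  simp only [pow_zero, mul_one, qPoch]
  rw [mul_comm]
  congr 1
  refine Finset.prod_congr rfl fun k _ => ?_
  rw [pow_succ']
  ring

lemma qPoch_add (x q : ℂ) (m n : ℕ) :
    qPoch x q (m + n) = qPoch x q m * qPoch (x * q ^ m) q n := by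
  rw [qPoch, Finset.prod_range_add]
  congr 1
  refine Finset.prod_congr rfl fun k _ => ?_
  rw [pow_add]
  ring

lemma qPoch_ne_zero_of_abs_lt {x q : ℂ} (hx : ‖x‖ < 1) (hq : ‖q‖ ≤ 1)
    (n : ℕ) : qPoch x q n ≠ 0 := by
  rw [qPoch, Finset.prod_ne_zero_iff]
  intro k _
  intro h
  have h1 : x * q ^ k = 1 := by linear_combination -h
  have : ‖x * q ^ k‖ < 1 := by
    rw [norm_mul, norm_pow]
    calc ‖x‖ * ‖q‖ ^ k ≤ ‖x‖ * 1 := by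
          exact mul_le_mul_of_nonneg_left (pow_le_one₀ (norm_nonneg q) hq) (norm_nonneg x)
      _ < 1 := by simpa using hx
  rw [h1] at this
  simp at this

lemma qPoch_ne_zero_of_ne_one {x q : ℂ} (hx : ∀ k : ℕ, x * q ^ k ≠ 1) (n : ℕ) :
    qPoch x q n ≠ 0 := by
  rw [qPoch, Finset.prod_ne_zero_iff]
  intro k _ h
  exact hx k (by linear_combination -h)

lemma qq_ne_zero {q : ℂ} (hq : ‖q‖ < 1) (n : ℕ) : qPoch q q n ≠ 0 := by
  rw [qPoch, Finset.prod_ne_zero_iff]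
  intro k _ h
  have h1 : q ^ (k+1) = 1 := by rw [pow_succ']; linear_combination -h
  have : ‖q ^ (k+1)‖ < 1 := by
    rw [norm_pow]
    calc ‖q‖ ^ (k+1) ≤ ‖q‖ ^ 1 :=
          pow_le_pow_of_le_one (norm_nonneg q) hq.le (by omega)
      _ < 1 := by simpa using hq
  rw [h1] at this
  simp at this

noncomputable def qE (q : ℂ) (N k : ℕ) : ℂ := ∏ j ∈ Finset.range k, (q ^ N - q ^ j)

lemma qE_succ (q : ℂ) (N k : ℕ) : qE q N (k + 1) = qE q N k * (q ^ N - q ^ k) :=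
  Finset.prod_range_succ _ _

lemma qE_eq_zero {q : ℂ} {N k : ℕ} (h : N < k) : qE q N k = 0 :=
  Finset.prod_eq_zero (Finset.mem_range.2 h) (by ring)

lemma qE_peel (q : ℂ) (N k : ℕ) :
    qE q (N + 1) (k + 1) = (q ^ (N + 1) - 1) * q ^ k * qE q N k := by
  rw [qE, Finset.prod_range_succ']
  have : ∀ j, q ^ (N+1) - q ^ (j+1) = q * (q ^ N - q ^ j) := by
    intro j; rw [pow_succ', pow_succ']; ring
  simp only [this, pow_zero]
  rw [Finset.prod_mul_distrib, Finset.prod_const, Finset.card_range, qE]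
  ring

lemma qE_rec (q : ℂ) (N k : ℕ) :
    qE q (N + 1) (k + 1) = qE q N (k + 1) - q ^ N * (1 - q ^ (k + 1)) * qE q N k := by
  rw [qE_peel, qE_succ]
  rw [pow_succ]
  ring

lemma gauss {q : ℂ} (hq : ‖q‖ < 1) (N : ℕ) (x : ℂ) :
    ∑ k ∈ Finset.range (N + 1), qE q N k * x ^ k / qPoch q q k = qPoch x q N := by
  induction N generalizing x with
  | zero => simp [qE, qPoch]
  | succ N ih =>
    have hPq := qq_ne_zero hq
    rw [Finset.sum_range_succ' (fun k => qE q (N+1) k * x ^ k / qPoch q q k) (N+1)]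
    have step : ∀ k, qE q (N+1) (k+1) * x ^ (k+1) / qPoch q q (k+1)
        = qE q N (k+1) * x ^ (k+1) / qPoch q q (k+1)
          - (q ^ N * x) * (qE q N k * x ^ k / qPoch q q k) := by
      intro k
      rw [qE_rec]
      have hP1 : qPoch q q (k+1) = qPoch q q k * (1 - q ^ (k+1)) := by
        rw [qPoch_succ, pow_succ']
      have h2 : (1 : ℂ) - q ^ (k+1) ≠ 0 := by
        have := qq_ne_zero hq (k+1)
        rw [hP1] at this
        exact right_ne_zero_of_mul this
      have key : ∀ (A B P d y : ℂ), P ≠ 0 → d ≠ 0 →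
          (A - B * d) * y / (P * d) = A * y / (P * d) - B * y / P := by
        intro A B P d y hP hd; field_simp
      rw [hP1]
      have := key (qE q N (k+1)) (q ^ N * qE q N k) (qPoch q q k) (1 - q ^ (k+1))
        (x ^ (k+1)) (hPq k) h2
      rw [show qE q N (k+1) - q ^ N * (1 - q ^ (k+1)) * qE q N k
          = qE q N (k+1) - (q ^ N * qE q N k) * (1 - q ^ (k+1)) by ring, this]
      rw [pow_succ]
      ring
    simp only [step]
    rw [Finset.sum_sub_distrib, ← Finset.mul_sum, ih]
    have ext : (∑ k ∈ Finset.range (N+1), qE q N (k+1) * x ^ (k+1) / qPoch q q (k+1))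
        + qE q (N+1) 0 * x ^ 0 / qPoch q q 0
        = ∑ k ∈ Finset.range (N+2), qE q N k * x ^ k / qPoch q q k := by
      rw [Finset.sum_range_succ' (fun k => qE q N k * x ^ k / qPoch q q k) (N+1)]
      congr 1
    have last : ∑ k ∈ Finset.range (N+2), qE q N k * x ^ k / qPoch q q k
        = qPoch x q N := by
      rw [Finset.sum_range_succ, qE_eq_zero (Nat.lt_succ_self N), ih]
      simp
    rw [sub_add_eq_add_sub, ext, last, qPoch_succ]
    ring

noncomputable def uB (q w : ℂ) (N : ℕ) (j : ℕ) : ℂ :=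
  qPoch (q ^ N) q j / qPoch q q j * w ^ j

lemma one_sub_pow_ne {q : ℂ} (hq : ‖q‖ < 1) (j : ℕ) : (1 : ℂ) - q ^ (j + 1) ≠ 0 := by
  intro h
  have h1 : q ^ (j + 1) = 1 := by linear_combination -h
  have : ‖q ^ (j + 1)‖ < 1 := by
    rw [norm_pow]
    calc ‖q‖ ^ (j + 1) ≤ ‖q‖ ^ 1 :=
          pow_le_pow_of_le_one (norm_nonneg q) hq.le (by omega)
      _ < 1 := by simpa using hq
  rw [h1] at this; simp at this

lemma qq_succ (q : ℂ) (j : ℕ) : qPoch q q (j + 1) = qPoch q q j * (1 - q ^ (j + 1)) := by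
  rw [qPoch_succ, ← pow_succ']

lemma uB_rec {q : ℂ} (hq : ‖q‖ < 1) (w : ℂ) (N j : ℕ) :
    uB q w (N + 1) (j + 1) = uB q w N (j + 1) + q ^ N * w * uB q w (N + 1) j := by
  have hP : qPoch q q j ≠ 0 := qq_ne_zero hq j
  have h2 : (1 : ℂ) - q ^ (j + 1) ≠ 0 := one_sub_pow_ne hq j
  have e1 : qPoch (q ^ (N + 1)) q (j + 1)
      = qPoch (q ^ (N + 1)) q j * (1 - q ^ N * q ^ (j + 1)) := by
    rw [qPoch_succ, ← pow_add, ← pow_add, Nat.add_assoc, Nat.add_comm 1 j]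
  have e2 : qPoch (q ^ N) q (j + 1) = (1 - q ^ N) * qPoch (q ^ (N + 1)) q j := by
    rw [qPoch_peel, ← pow_succ]
  have e3 := qq_succ q j
  have hkey : ∀ (A P a d v : ℂ), P ≠ 0 → (1 : ℂ) - d ≠ 0 →
      A * (1 - a * d) / (P * (1 - d)) * v = (1 - a) * A / (P * (1 - d)) * v + a * (A / P) * v := by
    intro A P a d v hPne hd; field_simp; ring
  simp only [uB]
  rw [e1, e2, e3, pow_succ w j]
  linear_combination hkey (qPoch (q ^ (N + 1)) q j) (qPoch q q j) (q ^ N) (q ^ (j + 1))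
    (w ^ j * w) hP h2

lemma summable_norm_uB {q : ℂ} (hq : ‖q‖ < 1) {w : ℂ} (hw : ‖w‖ < 1)
    (N : ℕ) : Summable (fun j => ‖uB q w N j‖) := by
  have hrec : ∀ j, uB q w N (j + 1) = uB q w N j * ((1 - q ^ (N + j)) * w / (1 - q ^ (j + 1))) := by
    intro j
    have hP : qPoch q q j ≠ 0 := qq_ne_zero hq j
    have h2 : (1 : ℂ) - q ^ (j + 1) ≠ 0 := one_sub_pow_ne hq j
    have h1 : qPoch (q ^ N) q (j + 1) = qPoch (q ^ N) q j * (1 - q ^ (N + j)) := by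
      rw [qPoch_succ, pow_add]
    simp only [uB]
    rw [h1, qq_succ q j, pow_succ w j]
    field_simp
  set r : ℝ := (1 + ‖w‖) / 2 with hr
  have hr1 : r < 1 := by rw [hr]; linarith
  have hwr : ‖w‖ < r := by rw [hr]; linarith
  have hq0 : Tendsto (fun j : ℕ => q ^ j) atTop (nhds 0) :=
    tendsto_pow_atTop_nhds_zero_of_norm_lt_one (by simpa using hq)
  have t1 : Tendsto (fun j : ℕ => ‖1 - q ^ (N + j)‖) atTop (nhds 1) := by
    have h : Tendsto (fun j : ℕ => (1 : ℂ) - q ^ (N + j)) atTop (nhds 1) := by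
      have : Tendsto (fun j : ℕ => q ^ (N + j)) atTop (nhds 0) := by
        simp only [pow_add]
        simpa using hq0.const_mul (q ^ N)
      simpa using tendsto_const_nhds.sub this
    simpa [Function.comp_def] using (continuous_norm.tendsto 1).comp h
  have t2 : Tendsto (fun j : ℕ => ‖1 - q ^ (j + 1)‖) atTop (nhds 1) := by
    have h : Tendsto (fun j : ℕ => (1 : ℂ) - q ^ (j + 1)) atTop (nhds 1) := by
      have : Tendsto (fun j : ℕ => q ^ (j + 1)) atTop (nhds 0) := by
        simp only [pow_succ]
        simpa using hq0.mul_const q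
      simpa using tendsto_const_nhds.sub this
    simpa [Function.comp_def] using (continuous_norm.tendsto 1).comp h
  have htend : Tendsto (fun j : ℕ => ‖1 - q ^ (N + j)‖ * ‖w‖
      / ‖1 - q ^ (j + 1)‖) atTop (nhds (‖w‖)) := by
    have := (t1.mul_const (‖w‖)).div t2 (by norm_num)
    simpa [Pi.div_def] using this
  have hev : ∀ᶠ j in atTop, ‖1 - q ^ (N + j)‖ * ‖w‖
      / ‖1 - q ^ (j + 1)‖ ≤ r := htend.eventually_le_const hwr
  apply summable_of_ratio_norm_eventually_le hr1
  filter_upwards [hev] with j hj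
  simp only [norm_norm]
  rw [hrec j, norm_mul]
  calc ‖uB q w N j‖ * ‖(1 - q ^ (N + j)) * w / (1 - q ^ (j + 1))‖
      = (‖1 - q ^ (N + j)‖ * ‖w‖ / ‖1 - q ^ (j + 1)‖)
        * ‖uB q w N j‖ := by
        simp [norm_div]; ring
    _ ≤ r * ‖uB q w N j‖ := mul_le_mul_of_nonneg_right hj (norm_nonneg _)

lemma uB_zero (q w : ℂ) (N : ℕ) : uB q w N 0 = 1 := by simp [uB, qPoch]

lemma hasSum_uB {q : ℂ} (hq : ‖q‖ < 1) {w : ℂ} (hw : ‖w‖ < 1) (N : ℕ) :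
    HasSum (uB q w N) (1 / qPoch w q N) := by
  induction N with
  | zero =>
    have hzero : ∀ j, j ≠ 0 → uB q w 0 j = 0 := by
      intro j hj
      obtain ⟨i, rfl⟩ := Nat.exists_eq_succ_of_ne_zero hj
      simp only [uB]
      rw [qPoch_peel]
      simp
    have := hasSum_single (f := uB q w 0) 0 hzero
    rw [uB_zero] at this
    simpa [qPoch] using this
  | succ N ih =>
    have hsum : Summable (uB q w (N + 1)) := (summable_norm_uB hq hw (N + 1)).of_norm
    obtain ⟨T, hTsum⟩ := hsum
    have hshift : HasSum (fun j => uB q w (N + 1) (j + 1)) (T - 1) := by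
      refine (hasSum_nat_add_iff 1).2 ?_
      simpa [uB_zero] using hTsum
    have hshiftN : HasSum (fun j => uB q w N (j + 1)) (1 / qPoch w q N - 1) := by
      refine (hasSum_nat_add_iff 1).2 ?_
      simpa [uB_zero] using ih
    have hrhs : HasSum (fun j => uB q w N (j + 1) + q ^ N * w * uB q w (N + 1) j)
        ((1 / qPoch w q N - 1) + q ^ N * w * T) := hshiftN.add (hTsum.mul_left _)
    have heq : T - 1 = (1 / qPoch w q N - 1) + q ^ N * w * T := by
      refine HasSum.unique ?_ hrhs
      simpa only [uB_rec hq w N] using hshift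
    have hPw : qPoch w q N ≠ 0 := qPoch_ne_zero_of_abs_lt hw hq.le N
    have hfac : (1 : ℂ) - w * q ^ N ≠ 0 := by
      intro h
      have h1 : w * q ^ N = 1 := by linear_combination -h
      have : ‖w * q ^ N‖ < 1 := by
        rw [norm_mul, norm_pow]
        calc ‖w‖ * ‖q‖ ^ N ≤ ‖w‖ * 1 :=
              mul_le_mul_of_nonneg_left (pow_le_one₀ (norm_nonneg q) hq.le)
                (norm_nonneg w)
          _ < 1 := by simpa using hw
      rw [h1] at this; simp at this
    have hTval : T = 1 / qPoch w q (N + 1) := by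
      rw [qPoch_succ]
      have h3 : T * (1 - w * q ^ N) = 1 / qPoch w q N := by linear_combination heq
      field_simp at h3 ⊢
      linear_combination h3
    rwa [← hTval]

noncomputable def uA (q a z : ℂ) (N : ℕ) (k : ℕ) : ℂ := qE q N k * (a * z) ^ k / qPoch q q k

noncomputable def cT (q t a : ℂ) (N : ℕ) (M : ℕ) : ℂ :=
  ∑ k ∈ Finset.range (M + 1),
    gbinom q M k * a ^ k * q ^ (N * k) * t ^ (M - k) *
      qPoch (q ^ (-(N : ℤ))) q k * qPoch (q ^ N) q (M - k)

lemma qE_eq {q : ℂ} (hq0 : q ≠ 0) (N k : ℕ) :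
    qPoch (q ^ (-(N : ℤ))) q k * q ^ (N * k) = qE q N k := by
  rw [qPoch, qE, pow_mul,
    show ((q : ℂ) ^ N) ^ k = ∏ _j ∈ Finset.range k, (q ^ N) by
      rw [Finset.prod_const, Finset.card_range],
    ← Finset.prod_mul_distrib]
  refine Finset.prod_congr rfl fun j _ => ?_
  have hinv : q ^ (-(N : ℤ)) * q ^ N = 1 := by
    rw [← zpow_natCast q N, ← zpow_add₀ hq0]
    simp
  linear_combination (-(q ^ j : ℂ)) * hinv

lemma uA_eq_zero {q a z : ℂ} {N k : ℕ} (h : N < k) : uA q a z N k = 0 := by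
  rw [uA, qE_eq_zero h]; simp

lemma hasSum_uA {q : ℂ} (hq : ‖q‖ < 1) (a z : ℂ) (N : ℕ) :
    HasSum (uA q a z N) (qPoch (a * z) q N) := by
  have h : HasSum (uA q a z N) (∑ k ∈ Finset.range (N + 1), uA q a z N k) :=
    hasSum_sum_of_ne_finset_zero (s := Finset.range (N + 1)) (f := uA q a z N)
    (fun k hk => uA_eq_zero (by simpa using hk))
  rwa [show ∑ k ∈ Finset.range (N + 1), uA q a z N k = qPoch (a * z) q N from gauss hq N (a * z)]
    at h

lemma summable_norm_uA (q a z : ℂ) (N : ℕ) :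
    Summable (fun k => ‖uA q a z N k‖) :=
  summable_of_ne_finset_zero (s := Finset.range (N + 1))
    (fun k hk => by rw [uA_eq_zero (by simpa using hk), norm_zero])

lemma cT_term {q : ℂ} (hq0 : q ≠ 0) (hq : ‖q‖ < 1) (t a z : ℂ) (N M : ℕ) :
    cT q t a N M * z ^ M / qPoch q q M
      = ∑ k ∈ Finset.range (M + 1), uA q a z N k * uB q (t * z) N (M - k) := by
  rw [cT, Finset.sum_mul, Finset.sum_div]
  refine Finset.sum_congr rfl fun k hk => ?_
  have hkM : k ≤ M := by simpa [Nat.lt_succ_iff] using hk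
  rw [gbinom, if_pos hkM, uA, uB]
  rw [← qE_eq hq0 N k, mul_pow, mul_pow, ← pow_mul_pow_sub z hkM]
  have h1 : qPoch q q k ≠ 0 := qq_ne_zero hq k
  have h2 : qPoch q q (M - k) ≠ 0 := qq_ne_zero hq (M - k)
  have h3 : qPoch q q M ≠ 0 := qq_ne_zero hq M
  field_simp

lemma hasSum_cT {q : ℂ} (hq0 : q ≠ 0) (hq : ‖q‖ < 1) {t : ℂ} (ht : ‖t‖ < 1)
    (a : ℂ) {z : ℂ} (hz : ‖z‖ ≤ 1) (N : ℕ) :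
    HasSum (fun M => cT q t a N M * z ^ M / qPoch q q M)
      (qPoch (a * z) q N / qPoch (t * z) q N) := by
  have htz : ‖t * z‖ < 1 := by
    rw [norm_mul]
    calc ‖t‖ * ‖z‖ ≤ ‖t‖ * 1 :=
          mul_le_mul_of_nonneg_left hz (norm_nonneg t)
      _ < 1 := by simpa using ht
  have hA := hasSum_uA hq a z N
  have hB := hasSum_uB hq htz N
  have h := hasSum_sum_range_mul_of_summable_norm (f := uA q a z N) (g := uB q (t * z) N)
    (summable_norm_uA q a z N) (summable_norm_uB hq htz N)
  rw [hA.tsum_eq, hB.tsum_eq] at h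
  have heq : (fun n => ∑ k ∈ Finset.range (n + 1), uA q a z N k * uB q (t * z) N (n - k))
      = fun M => cT q t a N M * z ^ M / qPoch q q M := by
    funext M; rw [cT_term hq0 hq t a z N M]
  rw [heq] at h
  rw [mul_one_div] at h; exact h

lemma summable_norm_cT {q : ℂ} (hq0 : q ≠ 0) (hq : ‖q‖ < 1) {t : ℂ}
    (ht : ‖t‖ < 1) (a : ℂ) {z : ℂ} (hz : ‖z‖ ≤ 1) (N : ℕ) :
    Summable (fun M => ‖cT q t a N M * z ^ M / qPoch q q M‖) := by
  have htz : ‖t * z‖ < 1 := by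
    rw [norm_mul]
    calc ‖t‖ * ‖z‖ ≤ ‖t‖ * 1 :=
          mul_le_mul_of_nonneg_left hz (norm_nonneg t)
      _ < 1 := by simpa using ht
  have h := summable_norm_sum_mul_range_of_summable_norm (f := uA q a z N) (g := uB q (t * z) N) (summable_norm_uA q a z N)
    (summable_norm_uB hq htz N)
  refine h.congr fun M => ?_
  rw [cT_term hq0 hq t a z N M]

set_option maxHeartbeats 1600000 in
theorem stmt0 (N : ℕ) (hN : 1 ≤ N) (q t a : ℂ) (hq0 : 0 < ‖q‖)
    (hq1 : ‖q‖ < 1) (ht : ‖t‖ < 1)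
    (ha : ∀ k : ℕ, a * q ^ k ≠ 1)
    (g : ℕ → ℂ) (hg : Summable fun n => ‖g n‖) :
    ∑' n : ℕ, g n *
        (qPoch (a * q ^ N) q n * qPoch t q n / (qPoch (t * q ^ N) q n * qPoch a q n)
          - qPoch t q N / qPoch a q N)
      = qPoch t q N / qPoch a q N *
        ∑' n : ℕ,
          (∑ k ∈ Finset.range (n + 2),
              gbinom q (n + 1) k * a ^ k * q ^ (N * k) * t ^ (n + 1 - k) *
                qPoch (q ^ (-(N : ℤ))) q k * qPoch (q ^ N) q (n + 1 - k)) *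
            (∑' m : ℕ, g m * (q ^ (n + 1)) ^ m) / qPoch q q (n + 1) := by
  have hq0c : q ≠ 0 := by
    intro h; rw [h] at hq0; simp at hq0
  set C : ℂ := qPoch t q N / qPoch a q N with hC
  -- abs facts
  have habs_mul : ∀ (x : ℂ) (k : ℕ), ‖x‖ < 1 → ‖x * q ^ k‖ < 1 := by
    intro x k hx
    rw [norm_mul, norm_pow]
    calc ‖x‖ * ‖q‖ ^ k ≤ ‖x‖ * 1 :=
          mul_le_mul_of_nonneg_left (pow_le_one₀ (norm_nonneg q) hq1.le)
            (norm_nonneg x)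
      _ < 1 := by simpa using hx
  have hAN : qPoch a q N ≠ 0 := qPoch_ne_zero_of_ne_one ha N
  have hAm : ∀ m, qPoch a q m ≠ 0 := qPoch_ne_zero_of_ne_one ha
  have hAmN : ∀ m, qPoch (a * q ^ m) q N ≠ 0 := by
    intro m
    refine qPoch_ne_zero_of_ne_one (fun k => ?_) N
    rw [mul_assoc, ← pow_add]
    exact ha (m + k)
  have hTmN : ∀ m, qPoch (t * q ^ m) q N ≠ 0 := fun m =>
    qPoch_ne_zero_of_abs_lt (habs_mul t m ht) hq1.le N
  have hTNm : ∀ m, qPoch (t * q ^ N) q m ≠ 0 := fun m =>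
    qPoch_ne_zero_of_abs_lt (habs_mul t N ht) hq1.le m
  -- bracket identity
  have bracket : ∀ m : ℕ,
      qPoch (a * q ^ N) q m * qPoch t q m / (qPoch (t * q ^ N) q m * qPoch a q m) - C
        = C * (qPoch (a * q ^ m) q N / qPoch (t * q ^ m) q N - 1) := by
    intro m
    have h1 : qPoch a q N * qPoch (a * q ^ N) q m = qPoch a q m * qPoch (a * q ^ m) q N := by
      rw [← qPoch_add, ← qPoch_add, Nat.add_comm]
    have h2 : qPoch t q N * qPoch (t * q ^ N) q m = qPoch t q m * qPoch (t * q ^ m) q N := by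
      rw [← qPoch_add, ← qPoch_add, Nat.add_comm]
    have r1 : qPoch (a * q ^ N) q m / qPoch a q m = qPoch (a * q ^ m) q N / qPoch a q N := by
      rw [div_eq_div_iff (hAm m) hAN]
      linear_combination h1
    have r2 : qPoch t q m / qPoch (t * q ^ N) q m
        = qPoch t q N / qPoch (t * q ^ m) q N := by
      rw [div_eq_div_iff (hTNm m) (hTmN m)]
      linear_combination -h2
    have split : qPoch (a * q ^ N) q m * qPoch t q m
        / (qPoch (t * q ^ N) q m * qPoch a q m)
        = (qPoch (a * q ^ N) q m / qPoch a q m) * (qPoch t q m / qPoch (t * q ^ N) q m) := by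
      rw [div_mul_div_comm]
      ring_nf
    rw [split, r1, r2, hC, mul_sub, mul_one]
    ring
  -- per-m HasSum
  have cT_zero : cT q t a N 0 = 1 := by
    simp [cT, gbinom, qPoch]
  have hS : ∀ m : ℕ, HasSum (fun n => cT q t a N (n + 1) * (q ^ (n + 1)) ^ m
      / qPoch q q (n + 1))
      (qPoch (a * q ^ m) q N / qPoch (t * q ^ m) q N - 1) := by
    intro m
    have hz : ‖(q : ℂ) ^ m‖ ≤ 1 := by
      rw [norm_pow]
      exact pow_le_one₀ (norm_nonneg q) hq1.le
    have h := hasSum_cT hq0c hq1 ht a hz N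
    have hfull : HasSum (fun n => cT q t a N (n + 1) * (q ^ m) ^ (n + 1)
        / qPoch q q (n + 1))
        (qPoch (a * q ^ m) q N / qPoch (t * q ^ m) q N - 1) := by
      refine (hasSum_nat_add_iff
        (f := fun M => cT q t a N M * (q ^ m) ^ M / qPoch q q M) 1).2 ?_
      have h0 : (∑ i ∈ Finset.range 1, cT q t a N i * (q ^ m) ^ i / qPoch q q i) = 1 := by
        simp [cT_zero, qPoch]
      rw [h0, sub_add_cancel]
      exact h
    have hpow : ∀ n : ℕ, ((q : ℂ) ^ m) ^ (n + 1) = (q ^ (n + 1)) ^ m := by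
      intro n
      rw [← pow_mul, ← pow_mul, Nat.mul_comm]
    simpa only [hpow] using hfull
  -- the double sum function
  set f : ℕ → ℕ → ℂ := fun m n => g m * (cT q t a N (n + 1) * (q ^ (n + 1)) ^ m
    / qPoch q q (n + 1)) with hf
  have hd : Summable (fun n => ‖cT q t a N (n + 1) / qPoch q q (n + 1)‖) := by
    have hz1 : ‖(1 : ℂ)‖ ≤ 1 := by simp
    have h := summable_norm_cT hq0c hq1 ht a hz1 N
    have h2 := (summable_nat_add_iff
      (f := fun M => ‖cT q t a N M * 1 ^ M / qPoch q q M‖) 1).2 h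
    refine h2.congr fun n => ?_
    simp
  have huncur : Summable (Function.uncurry f) := by
    refine Summable.of_norm_bounded
      (g := fun p : ℕ × ℕ => ‖g p.1‖ * ‖cT q t a N (p.2 + 1) / qPoch q q (p.2 + 1)‖)
      (hg.mul_of_nonneg hd (fun m => norm_nonneg _) (fun n => norm_nonneg _)) ?_
    rintro ⟨m, n⟩
    have hfmn : Function.uncurry f (m, n)
        = g m * (cT q t a N (n + 1) / qPoch q q (n + 1) * (q ^ (n + 1)) ^ m) := by
      rw [Function.uncurry, hf]
      simp only
      rw [mul_div_right_comm]
    rw [hfmn, norm_mul, norm_mul]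
    refine mul_le_mul_of_nonneg_left ?_ (norm_nonneg (g m))
    calc ‖cT q t a N (n + 1) / qPoch q q (n + 1)‖ * ‖((q : ℂ) ^ (n + 1)) ^ m‖
        ≤ ‖cT q t a N (n + 1) / qPoch q q (n + 1)‖ * 1 := by
          refine mul_le_mul_of_nonneg_left ?_ (norm_nonneg _)
          rw [norm_pow, norm_pow]
          exact pow_le_one₀ (pow_nonneg (norm_nonneg q) _)
            (pow_le_one₀ (norm_nonneg q) hq1.le)
      _ = ‖cT q t a N (n + 1) / qPoch q q (n + 1)‖ := mul_one _
  have swap : ∑' (m : ℕ), ∑' (n : ℕ), f m n = ∑' (n : ℕ), ∑' (m : ℕ), f m n :=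
    (Summable.tsum_comm huncur).symm
  calc ∑' m : ℕ, g m *
        (qPoch (a * q ^ N) q m * qPoch t q m / (qPoch (t * q ^ N) q m * qPoch a q m) - C)
      = ∑' m : ℕ, C * ∑' n : ℕ, f m n := by
        refine tsum_congr fun m => ?_
        rw [bracket m, ← (hS m).tsum_eq]
        have : ∑' (n : ℕ), f m n = g m * ∑' n : ℕ, (cT q t a N (n + 1) * (q ^ (n + 1)) ^ m
            / qPoch q q (n + 1)) := by
          rw [hf]
          exact tsum_mul_left
        rw [this]
        ring
    _ = C * ∑' (m : ℕ), ∑' (n : ℕ), f m n := tsum_mul_left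
    _ = C * ∑' (n : ℕ), ∑' (m : ℕ), f m n := by rw [swap]
    _ = C * ∑' n : ℕ, cT q t a N (n + 1) * (∑' m : ℕ, g m * (q ^ (n + 1)) ^ m)
          / qPoch q q (n + 1) := by
        refine congrArg (fun Z => C * Z) (tsum_congr fun n => ?_)
        have hfn : ∀ m, f m n = (cT q t a N (n + 1) / qPoch q q (n + 1))
            * (g m * (q ^ (n + 1)) ^ m) := by
          intro m
          rw [hf]
          ring
        rw [tsum_congr hfn, tsum_mul_left, div_mul_eq_mul_div]
    _ = C * ∑' n : ℕ,
          (∑ k ∈ Finset.range (n + 2),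
              gbinom q (n + 1) k * a ^ k * q ^ (N * k) * t ^ (n + 1 - k) *
                qPoch (q ^ (-(N : ℤ))) q k * qPoch (q ^ N) q (n + 1 - k)) *
            (∑' m : ℕ, g m * (q ^ (n + 1)) ^ m) / qPoch q q (n + 1) := rfl
end

section
/- Let q, t ∈ ℂ with |q| < 1, |tq| < 1 and t·q^{2k+1} ≠ 1 for every integer k ≥ 0. Then ∑_{n=0}^∞ q^{n²} / ∏_{k=0}^{n−1}(1 − t q^{2k+1}) = 1 + ∑_{n=1}^∞ q^n · ∏_{k=1}^{n−1}( t + q^{2k} ). -/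
noncomputable def Hc (Q : ℂ) : ℕ → ℕ → ℂ
  | 0, 0 => 1
  | 0, _+1 => 0
  | _+1, 0 => 1
  | n+1, m+1 => Hc Q n (m+1) + Q^n * Hc Q (n+1) m
  termination_by n m => (n, m)
lemma Hc_succ (Q : ℂ) (n m : ℕ) :
    Hc Q (n+1) (m+1) = Hc Q n (m+1) + Q^n * Hc Q (n+1) m := by rw [Hc]
@[simp] lemma Hc_n0 (Q : ℂ) (n : ℕ) : Hc Q n 0 = 1 := by cases n <;> rw [Hc]
@[simp] lemma Hc_0m (Q : ℂ) (m : ℕ) : Hc Q 0 (m+1) = 0 := by rw [Hc]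
lemma Hc_one (Q : ℂ) : ∀ n, (1 - Q) * Hc Q n 1 = 1 - Q^n := by
  intro n
  induction n with
  | zero => simp
  | succ n ih => rw [Hc_succ]; simp only [Hc_n0]; linear_combination ih

lemma Hc_p2 (Q : ℂ) : ∀ n m, Hc Q (n+1) (m+1) = Q^(m+1) * Hc Q n (m+1) + Hc Q (n+1) m := by
  intro n
  induction n with
  | zero =>
    intro m
    induction m with
    | zero => simp [Hc_succ]
    | succ m _ => rw [Hc_succ]; simp
  | succ n ihn =>
    intro m
    induction m with
    | zero =>
      rw [Hc_succ]
      simp only [Hc_n0]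
      linear_combination Hc_one Q (n+1)
    | succ m ihm =>
      have d1 := Hc_succ Q (n+1) (m+1)
      have d2 := Hc_succ Q (n+1) m
      have d3 := Hc_succ Q n (m+1)
      have i1 := ihn (m+1)
      have hX : (1 - Q^(m+2)) * Hc Q n (m+2) = (1 - Q^n) * Hc Q (n+1) (m+1) := by
        linear_combination i1 - d3
      have h1 : (1 - Q^(m+2)) * Hc Q (n+1) (m+2) = (1 - Q^(n+1)*Q^(m+1)) * Hc Q (n+1) (m+1) := by
        linear_combination (1 - Q^(m+2)) * d3 + hX
      have hZ : (1 - Q^(m+1)) * Hc Q (n+1) (m+1) = (1 - Q^(n+1)) * Hc Q (n+2) m := by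
        linear_combination ihm - d2
      have h2 : (1 - Q^(n+1)) * Hc Q (n+2) (m+1) = (1 - Q^(n+1)*Q^(m+1)) * Hc Q (n+1) (m+1) := by
        linear_combination (1 - Q^(n+1)) * d2 - Q^(n+1) * hZ
      linear_combination d1 + h1 - h2

open Finset in
lemma Hc_sum (Q : ℂ) (n : ℕ) : ∀ m,
    (∑ p ∈ Finset.HasAntidiagonal.antidiagonal m, Hc Q n p.1 * Q^(n * p.2)) = Hc Q (n+1) m := by
  intro m
  induction m with
  | zero => simp
  | succ m ih =>
    rw [Finset.Nat.sum_antidiagonal_succ', Hc_succ, ← ih, Finset.mul_sum]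
    simp only [mul_zero, pow_zero, mul_one]
    congr 1
    refine Finset.sum_congr rfl fun p _ => ?_
    rw [Nat.mul_succ, pow_add]
    ring

lemma Hc_bound {Q : ℂ} (hQ : ‖Q‖ < 1) : ∀ n m,
    ‖Hc Q n m‖ ≤ ∏ j ∈ Finset.range m, (1 - ‖Q‖ ^ (j+1))⁻¹ := by
  set r := ‖Q‖ with hr
  have hr0 : 0 ≤ r := norm_nonneg Q
  have hrj : ∀ j : ℕ, 0 < 1 - r^(j+1) := by
    intro j
    have := pow_lt_one₀ hr0 hQ (by omega : j+1 ≠ 0)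
    linarith
  have hBnn : ∀ m, 0 ≤ ∏ j ∈ Finset.range m, (1 - r^(j+1))⁻¹ := by
    intro m
    exact Finset.prod_nonneg fun j _ => le_of_lt (inv_pos.mpr (hrj j))
  intro n
  induction n with
  | zero =>
    intro m
    cases m with
    | zero => simp
    | succ m => simpa using hBnn (m+1)
  | succ n ihn =>
    intro m
    induction m with
    | zero => simp
    | succ m ihm =>
      rw [Hc_p2]
      have hB : (1 - r^(m+1)) * ∏ j ∈ Finset.range (m+1), (1 - r^(j+1))⁻¹
          = ∏ j ∈ Finset.range m, (1 - r^(j+1))⁻¹ := by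
        rw [Finset.prod_range_succ]
        field_simp
        rw [mul_div_cancel_left₀ _ (hrj m).ne']
      calc ‖Q^(m+1) * Hc Q n (m+1) + Hc Q (n+1) m‖
          ≤ ‖Q^(m+1) * Hc Q n (m+1)‖ + ‖Hc Q (n+1) m‖ :=
            norm_add_le _ _
        _ = r^(m+1) * ‖Hc Q n (m+1)‖ + ‖Hc Q (n+1) m‖ := by
            rw [norm_mul, norm_pow]
        _ ≤ r^(m+1) * ∏ j ∈ Finset.range (m+1), (1 - r^(j+1))⁻¹
            + ∏ j ∈ Finset.range m, (1 - r^(j+1))⁻¹ := by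
            gcongr <;> first | exact ihn (m+1) | exact ihm
        _ = ∏ j ∈ Finset.range (m+1), (1 - r^(j+1))⁻¹ := by
            rw [← hB]; ring

lemma prod_inv_bound {r : ℝ} (h0 : 0 ≤ r) (h1 : r < 1) (m : ℕ) :
    ∏ j ∈ Finset.range m, (1 - r^(j+1))⁻¹ ≤ Real.exp (r / (1-r)^2) := by
  have hrj : ∀ j : ℕ, 0 < 1 - r^(j+1) := by
    intro j
    have := pow_lt_one₀ h0 h1 (by omega : j+1 ≠ 0)
    linarith
  have h1r : 0 < 1 - r := by linarith
  have key : ∀ j : ℕ, (1 - r^(j+1))⁻¹ ≤ Real.exp (r^(j+1) / (1-r)) := by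
    intro j
    have hxr : r^(j+1) ≤ r := pow_le_of_le_one h0 h1.le (Nat.succ_ne_zero j)
    have hx0 : 0 ≤ r^(j+1) := pow_nonneg h0 _
    have hy0 : 0 ≤ r^(j+1)/(1-r) := div_nonneg hx0 h1r.le
    have hy : r^(j+1) = (r^(j+1)/(1-r)) * (1-r) := by field_simp
    have hE := Real.add_one_le_exp (r^(j+1)/(1-r))
    rw [inv_eq_one_div, div_le_iff₀ (hrj j)]
    nlinarith [mul_nonneg hy0 (sub_nonneg.mpr hxr)]
  calc ∏ j ∈ Finset.range m, (1 - r^(j+1))⁻¹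
      ≤ ∏ j ∈ Finset.range m, Real.exp (r^(j+1) / (1-r)) := by
        refine Finset.prod_le_prod (fun j _ => le_of_lt (inv_pos.mpr (hrj j))) fun j _ => key j
    _ = Real.exp (∑ j ∈ Finset.range m, r^(j+1) / (1-r)) := by rw [Real.exp_sum]
    _ ≤ Real.exp (r / (1-r)^2) := by
        apply Real.exp_le_exp.mpr
        rw [← Finset.sum_div, div_le_div_iff₀ h1r (by positivity)]
        have hgs : ∑ j ∈ Finset.range m, r^(j+1) ≤ r * (1-r)⁻¹ := by
          have : ∑ j ∈ Finset.range m, r^(j+1) = r * ∑ j ∈ Finset.range m, r^j := by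
            rw [Finset.mul_sum]
            exact Finset.sum_congr rfl fun j _ => by ring
          rw [this]
          have hle : ∑ j ∈ Finset.range m, r^j ≤ (1-r)⁻¹ := by
            rw [← tsum_geometric_of_lt_one h0 h1]
            exact Summable.sum_le_tsum _ (fun j _ => pow_nonneg h0 j)
              (summable_geometric_of_lt_one h0 h1)
          nlinarith
        calc (∑ j ∈ Finset.range m, r^(j+1)) * (1-r)^2
            ≤ (r * (1-r)⁻¹) * (1-r)^2 := by
              apply mul_le_mul_of_nonneg_right hgs (by positivity)
          _ = r * (1-r) := by field_simp

lemma Hc_abs_le {Q : ℂ} (hQ : ‖Q‖ < 1) (n m : ℕ) :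
    ‖Hc Q n m‖ ≤ Real.exp (‖Q‖ / (1 - ‖Q‖)^2) :=
  (Hc_bound hQ n m).trans (prod_inv_bound (norm_nonneg Q) hQ m)

lemma summable_Hz {Q z : ℂ} (hQ : ‖Q‖ < 1) (hz : ‖z‖ < 1) (n : ℕ) :
    Summable fun m => ‖Hc Q n m * z^m‖ := by
  refine Summable.of_nonneg_of_le (fun m => norm_nonneg _) (fun m => ?_)
    ((summable_geometric_of_lt_one (norm_nonneg z) hz).mul_left
      (Real.exp (‖Q‖ / (1 - ‖Q‖)^2)))
  rw [norm_mul, norm_pow]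
  exact mul_le_mul_of_nonneg_right (Hc_abs_le hQ n m) (pow_nonneg (norm_nonneg z) m)

lemma tsumH {Q z : ℂ} (hQ : ‖Q‖ < 1) (hz : ‖z‖ < 1) :
    ∀ n, ∑' m, Hc Q n m * z^m = (∏ k ∈ Finset.range n, (1 - z * Q^k))⁻¹ := by
  intro n
  induction n with
  | zero =>
    rw [Finset.range_zero, Finset.prod_empty, inv_one]
    have h0 : ∀ m : ℕ, m ≠ 0 → Hc Q 0 m * z^m = 0 := by
      intro m hm
      obtain ⟨k, rfl⟩ := Nat.exists_eq_succ_of_ne_zero hm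
      simp
    rw [tsum_eq_single 0 h0]
    simp
  | succ n ih =>
    have hzQ : ‖z * Q^n‖ < 1 := by
      rw [norm_mul, norm_pow]
      calc ‖z‖ * ‖Q‖ ^ n ≤ ‖z‖ * 1 := by
            refine mul_le_mul_of_nonneg_left (pow_le_one₀ (norm_nonneg Q) hQ.le) (norm_nonneg z)
        _ = ‖z‖ := mul_one _
        _ < 1 := hz
    have hgeomn : Summable fun j => ‖(z * Q^n)^j‖ := by
      simp only [norm_pow]
      exact summable_geometric_of_lt_one (norm_nonneg _) (by simpa using hzQ)
    rw [Finset.prod_range_succ, mul_inv, ← ih, ← tsum_geometric_of_norm_lt_one hzQ,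
      tsum_mul_tsum_eq_tsum_sum_antidiagonal_of_summable_norm (summable_Hz hQ hz n) hgeomn]
    refine tsum_congr fun m => ?_
    rw [← Hc_sum Q n m, Finset.sum_mul]
    refine Finset.sum_congr rfl fun p hp => ?_
    have hpm : p.1 + p.2 = m := Finset.HasAntidiagonal.mem_antidiagonal.mp hp
    rw [mul_pow, ← pow_mul, ← hpm, pow_add]
    ring

lemma prodT (q t : ℂ) : ∀ N, (∏ k ∈ Finset.Icc 1 N, (t + q^(2*k))) =
    ∑ p ∈ Finset.HasAntidiagonal.antidiagonal N, t^p.2 * q^(p.1*(p.1+1)) * Hc (q^2) (p.1+1) p.2 := by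
  intro N
  induction N with
  | zero => simp
  | succ N ih =>
    set Q := q^2 with hQdef
    set F : ℕ × ℕ → ℂ := fun p => t^p.2 * q^(p.1*(p.1+1) + 2*p.2) * Hc Q p.1 p.2 with hF
    set G : ℕ × ℕ → ℂ := fun p => t^p.2 * q^(p.1*(p.1+1)) * Hc Q (p.1+1) p.2 with hG
    have A1 : ∑ p ∈ Finset.HasAntidiagonal.antidiagonal (N+1), F p = ∑ p ∈ Finset.HasAntidiagonal.antidiagonal N, F (p.1+1, p.2) := by
      rw [Finset.Nat.sum_antidiagonal_succ]
      simp [hF]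
    have A2 : ∑ p ∈ Finset.HasAntidiagonal.antidiagonal (N+1), F p
        = q^((N+1)*(N+2)) + ∑ p ∈ Finset.HasAntidiagonal.antidiagonal N, F (p.1, p.2+1) := by
      rw [Finset.Nat.sum_antidiagonal_succ']
      simp [hF]
    have hsplit : ∑ p ∈ Finset.HasAntidiagonal.antidiagonal N, G (p.1, p.2+1)
        = ∑ p ∈ Finset.HasAntidiagonal.antidiagonal N, (t * G p + F (p.1, p.2+1)) := by
      refine Finset.sum_congr rfl fun p _ => ?_
      simp only [hG, hF]
      rw [Hc_p2]
      rw [hQdef]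
      rw [pow_add, pow_add, ← pow_mul]
      ring
    have hmulq : ∑ p ∈ Finset.HasAntidiagonal.antidiagonal N, G p * q^(2*(N+1))
        = ∑ p ∈ Finset.HasAntidiagonal.antidiagonal N, F (p.1+1, p.2) := by
      refine Finset.sum_congr rfl fun p hp => ?_
      have hpm : p.1 + p.2 = N := Finset.HasAntidiagonal.mem_antidiagonal.mp hp
      simp only [hG, hF]
      have he : (p.1+1)*(p.1+1+1) + 2*p.2 = p.1*(p.1+1) + 2*(N+1) := by subst hpm; ring
      rw [he, pow_add]
      ring
    rw [Finset.prod_Icc_succ_top (by omega : 1 ≤ N+1), ih]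
    show (∑ p ∈ Finset.HasAntidiagonal.antidiagonal N, G p) * (t + q^(2*(N+1)))
      = ∑ p ∈ Finset.HasAntidiagonal.antidiagonal (N+1), G p
    rw [Finset.Nat.sum_antidiagonal_succ' (f := G)]
    have hGtop : G (N+1, 0) = q^((N+1)*(N+2)) := by simp [hG]
    rw [hGtop, hsplit, Finset.sum_add_distrib]
    have : ∑ p ∈ Finset.HasAntidiagonal.antidiagonal N, F (p.1, p.2+1)
        = ∑ p ∈ Finset.HasAntidiagonal.antidiagonal N, F (p.1+1, p.2) - q^((N+1)*(N+2)) := by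
      rw [← A1]; rw [A2]; ring
    rw [this, ← hmulq]
    have hc : ∑ p ∈ Finset.HasAntidiagonal.antidiagonal N, t * G p
        = (∑ p ∈ Finset.HasAntidiagonal.antidiagonal N, G p) * t := by
      rw [Finset.sum_mul]
      exact Finset.sum_congr rfl fun p _ => mul_comm _ _
    rw [hc, ← Finset.sum_mul]
    ring

lemma tsum_antidiagonal_eq {g : ℕ × ℕ → ℂ} (hg : Summable g) :
    ∑' n : ℕ, ∑ p ∈ Finset.HasAntidiagonal.antidiagonal n, g p = ∑' p : ℕ × ℕ, g p := by
  have hsig : Summable fun x : Σ n : ℕ, Finset.HasAntidiagonal.antidiagonal n => g (x.2 : ℕ × ℕ) :=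
    (Finset.HasAntidiagonal.sigmaAntidiagonalEquivProd.summable_iff (f := g)).mpr hg
  conv_lhs => congr; ext n; rw [← Finset.sum_finset_coe, ← tsum_fintype (L := .unconditional _)]
  rw [← Finset.HasAntidiagonal.sigmaAntidiagonalEquivProd.tsum_eq g]
  exact (Summable.tsum_sigma' (fun n => (hasSum_fintype _).summable) hsig).symm

theorem stmt8 (q t : ℂ) (hq : ‖q‖ < 1) (htq : ‖t * q‖ < 1)
    (ht : ∀ k : ℕ, t * q ^ (2 * k + 1) ≠ 1) :
    ∑' n : ℕ, q ^ (n ^ 2) / ∏ k ∈ Finset.range n, (1 - t * q ^ (2 * k + 1))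
      = 1 + ∑' n : ℕ, q ^ (n + 1) * ∏ k ∈ Finset.Icc 1 n, (t + q ^ (2 * k)) := by
  set Q : ℂ := q^2 with hQdef
  set z : ℂ := t*q with hzdef
  have hz : ‖z‖ < 1 := htq
  have hQ : ‖Q‖ < 1 := by
    rw [hQdef, norm_pow]
    exact pow_lt_one₀ (norm_nonneg q) hq two_ne_zero
  set K : ℝ := Real.exp (‖Q‖ / (1 - ‖Q‖)^2) with hK
  have hK0 : 0 ≤ K := Real.exp_nonneg _
  set f : ℕ × ℕ → ℂ := fun p => q^(p.1^2) * (Hc Q p.1 p.2 * z^p.2) with hf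
  set g : ℕ × ℕ → ℂ := fun p => f (p.1+1, p.2) with hgdef
  -- summability
  have h1 : Summable fun n : ℕ => ‖q‖ ^ (n^2) := by
    refine Summable.of_nonneg_of_le (fun n => pow_nonneg (norm_nonneg q) _)
      (fun n => pow_le_pow_of_le_one (norm_nonneg q) hq.le (Nat.le_self_pow two_ne_zero n))
      (summable_geometric_of_lt_one (norm_nonneg q) hq)
  have h2 : Summable fun m : ℕ => K * ‖z‖ ^ m :=
    (summable_geometric_of_lt_one (norm_nonneg z) hz).mul_left K
  have hfs : Summable f := by
    apply Summable.of_norm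
    refine Summable.of_nonneg_of_le (fun p => norm_nonneg _) (fun p => ?_)
      (h1.mul_of_nonneg h2 (fun n => pow_nonneg (norm_nonneg q) _)
        (fun m => mul_nonneg hK0 (pow_nonneg (norm_nonneg z) _)))
    simp only [hf, norm_mul, norm_pow]
    refine mul_le_mul_of_nonneg_left ?_ (pow_nonneg (norm_nonneg q) _)
    exact mul_le_mul_of_nonneg_right (Hc_abs_le hQ _ _) (pow_nonneg (norm_nonneg z) _)
  have hgs : Summable g := by
    have hinj : Function.Injective (fun p : ℕ × ℕ => (p.1+1, p.2)) := by
      intro a b hab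
      simp only [Prod.mk.injEq] at hab
      exact Prod.ext (by omega) hab.2
    exact hfs.comp_injective hinj
  -- LHS
  have hL : ∑' n : ℕ, q ^ (n ^ 2) / ∏ k ∈ Finset.range n, (1 - t * q ^ (2 * k + 1))
      = ∑' p : ℕ × ℕ, f p := by
    rw [Summable.tsum_prod hfs]
    refine tsum_congr fun n => ?_
    have hprod : ∏ k ∈ Finset.range n, (1 - t * q^(2*k+1))
        = ∏ k ∈ Finset.range n, (1 - z * Q^k) := by
      refine Finset.prod_congr rfl fun k _ => ?_
      rw [hzdef, hQdef, ← pow_mul, pow_add, pow_mul, pow_one]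
      ring
    rw [hprod, div_eq_mul_inv, ← tsumH hQ hz n, ← tsum_mul_left]
  -- split off n = 0
  have hzero : ∑' m : ℕ, f (0, m) = 1 := by
    have h0 : ∀ m : ℕ, m ≠ 0 → f (0, m) = 0 := by
      intro m hm
      obtain ⟨k, rfl⟩ := Nat.exists_eq_succ_of_ne_zero hm
      simp [hf]
    rw [tsum_eq_single 0 h0]
    simp [hf]
  have houter : Summable fun n : ℕ => ∑' m : ℕ, f (n, m) := hfs.prod
  have hsplit : ∑' p : ℕ × ℕ, f p = 1 + ∑' p : ℕ × ℕ, g p := by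
    rw [Summable.tsum_prod hfs, Summable.tsum_eq_zero_add houter, hzero, Summable.tsum_prod hgs]
  -- RHS
  have hR : ∀ n : ℕ, q^(n+1) * ∏ k ∈ Finset.Icc 1 n, (t + q^(2*k))
      = ∑ p ∈ Finset.HasAntidiagonal.antidiagonal n, g p := by
    intro n
    rw [prodT q t n, Finset.mul_sum]
    refine Finset.sum_congr rfl fun p hp => ?_
    have hpm : p.1 + p.2 = n := Finset.HasAntidiagonal.mem_antidiagonal.mp hp
    simp only [hgdef, hf, hzdef, hQdef]
    subst hpm
    rw [mul_pow]
    rw [show (p.1+1)^2 = p.1*(p.1+1) + (p.1 + 1) from by ring]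
    rw [show p.1 + p.2 + 1 = (p.1 + 1) + p.2 from by ring]
    rw [pow_add, pow_add]
    ring
  rw [hL, hsplit]
  congr 1
  rw [← tsum_antidiagonal_eq hgs]
  exact (tsum_congr hR).symm
end

section
/- Let q, t, c ∈ ℂ with |q| < 1, |t| < 1, |cq| < 1 and c ≠ 1. Then ∑_{n=1}^∞ t^n / ( (q;q)_n · (1 − cq^n) ) = ( t/(1−c) ) · ∑_{n=1}^∞ (1 − c^n) · q^{n−1} / (t q^{n−1};q)_∞. -/
open Complex Finset

noncomputable def Complex.abs : AbsoluteValue ℂ ℝ := NormedField.toAbsoluteValue ℂ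

lemma Complex.norm_eq_abs (z : ℂ) : ‖z‖ = Complex.abs z := rfl

section basic
variable {q : ℂ} (hq : Complex.abs q < 1)

lemma factor_ne_zero {x : ℂ} (hx : Complex.abs x < 1) (hq : Complex.abs q < 1) (k : ℕ) :
    1 - x * q ^ k ≠ 0 := by
  intro h
  have h1 : x * q ^ k = 1 := by linear_combination -h
  have : Complex.abs (x * q ^ k) < 1 := by
    rw [map_mul, map_pow]
    calc Complex.abs x * Complex.abs q ^ k ≤ Complex.abs x * 1 := by
          have : Complex.abs q ^ k ≤ 1 := pow_le_one₀ (Complex.abs.nonneg q) hq.le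
          nlinarith [Complex.abs.nonneg x]
      _ < 1 := by simpa using hx
  rw [h1] at this; simp at this

lemma qPoch_q_ne_zero (hq : Complex.abs q < 1) (n : ℕ) : qPoch q q n ≠ 0 := by
  apply Finset.prod_ne_zero_iff.2
  intro k _
  exact factor_ne_zero hq hq k

/-- uniform lower bound on `‖qPoch q q n‖`. -/
lemma qPoch_norm_ge (hq : Complex.abs q < 1) (n : ℕ) :
    Real.exp (-(Complex.abs q / (1 - Complex.abs q) ^ 2)) ≤ Complex.abs (qPoch q q n) := by
  set r := Complex.abs q with hr
  have hr0 : 0 ≤ r := Complex.abs.nonneg q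
  have hr1 : r < 1 := hq
  rw [qPoch, map_prod]
  have step : ∀ k ∈ Finset.range n,
      Real.exp (-(r ^ (k+1) / (1 - r))) ≤ Complex.abs (1 - q * q ^ k) := by
    intro k _
    have hqk : Complex.abs (q * q ^ k) = r ^ (k+1) := by
      rw [map_mul, map_pow, ← pow_succ']
    have hle : r ^ (k+1) ≤ r := by
      calc r ^ (k+1) = r * r ^ k := by ring
        _ ≤ r * 1 := by
              have : r ^ k ≤ 1 := pow_le_one₀ hr0 hr1.le
              nlinarith
        _ = r := by ring
    have h1 : 1 - r ^ (k+1) ≤ Complex.abs (1 - q * q ^ k) := by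
      have h := norm_sub_norm_le (1 : ℂ) (q * q ^ k)
      simp only [norm_one, Complex.norm_eq_abs] at h
      rw [hqk] at h
      linarith
    have h2 : Real.exp (-(r ^ (k+1) / (1 - r))) ≤ 1 - r ^ (k+1) := by
      have hpos : 0 < 1 - r ^ (k+1) := by nlinarith
      have hlog : Real.log ((1 - r ^ (k+1))⁻¹) ≤ (1 - r ^ (k+1))⁻¹ - 1 :=
        Real.log_le_sub_one_of_pos (by positivity)
      have hinv : (1 - r ^ (k+1))⁻¹ - 1 = r ^ (k+1) / (1 - r ^ (k+1)) := by
        field_simp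
        ring
      have : -(r ^ (k+1) / (1 - r ^ (k+1))) ≤ Real.log (1 - r ^ (k+1)) := by
        rw [Real.log_inv] at hlog
        linarith [hlog, hinv ▸ hlog]
      calc Real.exp (-(r ^ (k+1) / (1 - r))) ≤ Real.exp (-(r ^ (k+1) / (1 - r ^ (k+1)))) := by
            apply Real.exp_le_exp.2
            have : r ^ (k+1) / (1 - r ^ (k+1)) ≤ r ^ (k+1) / (1 - r) := by
              apply div_le_div_of_nonneg_left (by positivity) (by linarith) (by linarith)
            linarith
        _ ≤ Real.exp (Real.log (1 - r ^ (k+1))) := Real.exp_le_exp.2 this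
        _ = 1 - r ^ (k+1) := Real.exp_log hpos
    linarith
  calc Real.exp (-(r / (1 - r) ^ 2))
      ≤ ∏ k ∈ Finset.range n, Real.exp (-(r ^ (k+1) / (1 - r))) := by
        rw [← Real.exp_sum]
        apply Real.exp_le_exp.2
        have hsum : ∑ x ∈ Finset.range n, r ^ (x + 1) ≤ r / (1 - r) := by
          have h1 : ∑ x ∈ Finset.range n, r ^ (x+1) = r * ∑ x ∈ Finset.range n, r ^ x := by
            rw [Finset.mul_sum]; exact Finset.sum_congr rfl (fun x _ => by ring)
          have h2 : ∑ x ∈ Finset.range n, r ^ x ≤ (1 - r)⁻¹ := by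
            calc ∑ x ∈ Finset.range n, r ^ x ≤ ∑' x : ℕ, r ^ x :=
                  Summable.sum_le_tsum _ (fun k _ => by positivity)
                    (summable_geometric_of_lt_one hr0 hr1)
              _ = (1 - r)⁻¹ := tsum_geometric_of_lt_one hr0 hr1
          rw [h1, div_eq_mul_inv]
          nlinarith
        rw [Finset.sum_neg_distrib, ← Finset.sum_div]
        have h4 : (∑ x ∈ Finset.range n, r ^ (x+1)) / (1 - r) ≤ (r / (1 - r)) / (1 - r) := by
          gcongr
        have h5 : (r / (1 - r)) / (1 - r) = r / (1 - r) ^ 2 := by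
          rw [div_div, sq]
        linarith
    _ ≤ ∏ k ∈ Finset.range n, Complex.abs (1 - q * q ^ k) := by
        apply Finset.prod_le_prod (fun k _ => (Real.exp_pos _).le) step

/-- The Euler series `∑ x^n/(q;q)_n`. -/
noncomputable def eulerE (q x : ℂ) : ℂ := ∑' n : ℕ, x ^ n / qPoch q q n

lemma inv_qPoch_le (hq : Complex.abs q < 1) (n : ℕ) :
    (Complex.abs (qPoch q q n))⁻¹
      ≤ (Real.exp (-(Complex.abs q / (1 - Complex.abs q) ^ 2)))⁻¹ := by
  have h1 := qPoch_norm_ge hq n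
  have h2 := Real.exp_pos (-(Complex.abs q / (1 - Complex.abs q) ^ 2))
  exact inv_anti₀ h2 h1

lemma summable_eulerE (hq : Complex.abs q < 1) {x : ℂ} (hx : Complex.abs x < 1) :
    Summable (fun n : ℕ => x ^ n / qPoch q q n) := by
  apply Summable.of_norm_bounded (g := fun n => (Real.exp (-(Complex.abs q / (1 - Complex.abs q) ^ 2)))⁻¹ * Complex.abs x ^ n)
    (Summable.mul_left _ (summable_geometric_of_lt_one (Complex.abs.nonneg x) hx))
  intro n
  rw [norm_div, Complex.norm_eq_abs, Complex.norm_eq_abs, map_pow, div_eq_mul_inv, mul_comm]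
  exact mul_le_mul_of_nonneg_right (inv_qPoch_le hq n) (by positivity)

lemma eulerE_funceq (hq : Complex.abs q < 1) {x : ℂ} (hx : Complex.abs x < 1) :
    eulerE q (q * x) = (1 - x) * eulerE q x := by
  have hqx : Complex.abs (q * x) < 1 := by
    rw [map_mul]
    nlinarith [Complex.abs.nonneg q, Complex.abs.nonneg x]
  have hsx := summable_eulerE hq hx
  have hsqx := summable_eulerE hq hqx
  have key : ∀ n : ℕ, x * (x ^ n / qPoch q q n)
      = x ^ (n+1) / qPoch q q (n+1) - (q * x) ^ (n+1) / qPoch q q (n+1) := by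
    intro n
    have hne : qPoch q q (n+1) ≠ 0 := qPoch_q_ne_zero hq (n+1)
    have hne' : qPoch q q n ≠ 0 := qPoch_q_ne_zero hq n
    have hstep : qPoch q q (n+1) = qPoch q q n * (1 - q * q ^ n) := by
      rw [qPoch, qPoch, Finset.prod_range_succ]
    have hf : (1 - q * q ^ n) ≠ 0 := factor_ne_zero hq hq n
    rw [hstep]
    field_simp
    ring
  have h1 : x * eulerE q x = ∑' n : ℕ, (x ^ (n+1) / qPoch q q (n+1)
      - (q * x) ^ (n+1) / qPoch q q (n+1)) := by
    rw [eulerE, ← tsum_mul_left]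
    exact tsum_congr key
  have h2 : ∑' n : ℕ, (x ^ (n+1) / qPoch q q (n+1) - (q * x) ^ (n+1) / qPoch q q (n+1))
      = (eulerE q x - 1) - (eulerE q (q * x) - 1) := by
    rw [Summable.tsum_sub ((summable_nat_add_iff 1).2 hsx) ((summable_nat_add_iff 1).2 hsqx)]
    have e1 : eulerE q x = 1 + ∑' n : ℕ, x ^ (n+1) / qPoch q q (n+1) := by
      rw [eulerE, Summable.tsum_eq_zero_add hsx]
      simp [qPoch]
    have e2 : eulerE q (q * x) = 1 + ∑' n : ℕ, (q * x) ^ (n+1) / qPoch q q (n+1) := by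
      rw [eulerE, Summable.tsum_eq_zero_add hsqx]
      simp [qPoch]
    rw [e1, e2]; ring
  have := h1.trans h2
  linear_combination this

lemma abs_pow_mul_lt (hq : Complex.abs q < 1) {x : ℂ} (hx : Complex.abs x < 1) (N : ℕ) :
    Complex.abs (q ^ N * x) < 1 := by
  rw [map_mul, map_pow]
  have h1 : Complex.abs q ^ N ≤ 1 := pow_le_one₀ (Complex.abs.nonneg q) hq.le
  nlinarith [Complex.abs.nonneg x, pow_nonneg (Complex.abs.nonneg q) N]

lemma eulerE_iterate (hq : Complex.abs q < 1) {x : ℂ} (hx : Complex.abs x < 1) (N : ℕ) :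
    eulerE q (q ^ N * x) = qPoch x q N * eulerE q x := by
  induction N with
  | zero => simp [qPoch]
  | succ n ih =>
    have h1 : q ^ (n+1) * x = q * (q ^ n * x) := by ring
    rw [h1, eulerE_funceq hq (abs_pow_mul_lt hq hx n), ih, qPoch, qPoch,
      Finset.prod_range_succ]
    ring

lemma eulerE_sub_one_norm_le (hq : Complex.abs q < 1) {y : ℂ} (hy : Complex.abs y < 1) :
    ‖eulerE q y - 1‖ ≤ (Real.exp (-(Complex.abs q / (1 - Complex.abs q) ^ 2)))⁻¹
      * (1 - Complex.abs y)⁻¹ * Complex.abs y := by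
  set D := (Real.exp (-(Complex.abs q / (1 - Complex.abs q) ^ 2)))⁻¹ with hD
  have hD0 : 0 ≤ D := by positivity
  have hsy := summable_eulerE hq hy
  have e1 : eulerE q y - 1 = ∑' n : ℕ, y ^ (n+1) / qPoch q q (n+1) := by
    rw [eulerE, Summable.tsum_eq_zero_add hsy]
    simp [qPoch]
  rw [e1]
  have hsum2 : Summable (fun n : ℕ => D * Complex.abs y ^ (n+1)) := by
    apply Summable.mul_left
    exact ((summable_geometric_of_lt_one (Complex.abs.nonneg y) hy).comp_injective
      (add_left_injective 1))
  calc ‖∑' n : ℕ, y ^ (n+1) / qPoch q q (n+1)‖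
      ≤ ∑' n : ℕ, D * Complex.abs y ^ (n+1) := by
        apply norm_tsum_le_tsum_norm ?_ |>.trans
        · apply Summable.tsum_le_tsum _ _ hsum2
          · intro n
            rw [norm_div, Complex.norm_eq_abs, Complex.norm_eq_abs, map_pow,
              div_eq_mul_inv, mul_comm]
            exact mul_le_mul_of_nonneg_right (inv_qPoch_le hq (n+1)) (by positivity)
          · apply Summable.of_nonneg_of_le (fun n => norm_nonneg _) _ hsum2
            intro n
            rw [norm_div, Complex.norm_eq_abs, Complex.norm_eq_abs, map_pow,
              div_eq_mul_inv, mul_comm]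
            exact mul_le_mul_of_nonneg_right (inv_qPoch_le hq (n+1)) (by positivity)
        · apply Summable.of_nonneg_of_le (fun n => norm_nonneg _) _ hsum2
          intro n
          rw [norm_div, Complex.norm_eq_abs, Complex.norm_eq_abs, map_pow,
            div_eq_mul_inv, mul_comm]
          exact mul_le_mul_of_nonneg_right (inv_qPoch_le hq (n+1)) (by positivity)
    _ = D * Complex.abs y * ∑' n : ℕ, Complex.abs y ^ n := by
        rw [← tsum_mul_left]
        apply tsum_congr; intro n
        ring
    _ ≤ D * (1 - Complex.abs y)⁻¹ * Complex.abs y := by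
        rw [tsum_geometric_of_lt_one (Complex.abs.nonneg y) hy]
        ring_nf
        rfl

lemma eulerE_tendsto_one (hq : Complex.abs q < 1) {x : ℂ} (hx : Complex.abs x < 1) :
    Filter.Tendsto (fun N : ℕ => eulerE q (q ^ N * x)) Filter.atTop (nhds 1) := by
  set D := (Real.exp (-(Complex.abs q / (1 - Complex.abs q) ^ 2)))⁻¹ with hD
  have key : ∀ N : ℕ, ‖eulerE q (q ^ N * x) - 1‖
      ≤ (D * (1 - Complex.abs x)⁻¹ * Complex.abs x) * Complex.abs q ^ N := by
    intro N
    have hyx : Complex.abs (q ^ N * x) ≤ Complex.abs x := by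
      rw [map_mul, map_pow]
      have h1 : Complex.abs q ^ N ≤ 1 := pow_le_one₀ (Complex.abs.nonneg q) hq.le
      nlinarith [Complex.abs.nonneg x]
    have h := eulerE_sub_one_norm_le hq (abs_pow_mul_lt hq hx N)
    have h2 : (1 - Complex.abs (q ^ N * x))⁻¹ ≤ (1 - Complex.abs x)⁻¹ := by
      apply inv_anti₀ (by linarith) (by linarith)
    have h3 : Complex.abs (q ^ N * x) = Complex.abs q ^ N * Complex.abs x := by
      rw [map_mul, map_pow]
    calc ‖eulerE q (q ^ N * x) - 1‖
        ≤ D * (1 - Complex.abs (q ^ N * x))⁻¹ * Complex.abs (q ^ N * x) := h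
      _ ≤ D * (1 - Complex.abs x)⁻¹ * (Complex.abs q ^ N * Complex.abs x) := by
          rw [← h3]
          have hD0 : 0 ≤ D := by positivity
          have hy0 : 0 ≤ Complex.abs (q ^ N * x) := Complex.abs.nonneg _
          have hx0 : (0:ℝ) ≤ (1 - Complex.abs x)⁻¹ := inv_nonneg.2 (by linarith)
          nlinarith [mul_le_mul_of_nonneg_left h2 hD0]
      _ = (D * (1 - Complex.abs x)⁻¹ * Complex.abs x) * Complex.abs q ^ N := by ring
  have h0 : Filter.Tendsto (fun N : ℕ => eulerE q (q ^ N * x) - 1) Filter.atTop (nhds 0) := by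
    apply squeeze_zero_norm key
    rw [show (0:ℝ) = (D * (1 - Complex.abs x)⁻¹ * Complex.abs x) * 0 by ring]
    exact (tendsto_pow_atTop_nhds_zero_of_lt_one (Complex.abs.nonneg q) hq).const_mul _
  have := h0.add_const 1
  simpa using this

lemma multipliable_qPoch (hq : Complex.abs q < 1) {x : ℂ} (hx : Complex.abs x < 1) :
    Multipliable (fun k : ℕ => 1 - x * q ^ k) := by
  have hfn : ∀ (_ : Unit) (k : ℕ), (fun (k : ℕ) (_ : Unit) => 1 - x * q ^ k) k () ≠ 0 :=
    fun _ k => factor_ne_zero hx hq k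
  have hlog : Summable (fun k : ℕ => Complex.log (1 - x * q ^ k)) := by
    set C := Complex.abs x * ((Complex.abs x * (1 - Complex.abs x)⁻¹) / 2 + 1) with hC
    apply Summable.of_norm_bounded (g := fun k => C * Complex.abs q ^ k)
      (Summable.mul_left _ (summable_geometric_of_lt_one (Complex.abs.nonneg q) hq))
    intro k
    have hz : ‖-(x * q ^ k)‖ < 1 := by
      rw [norm_neg, Complex.norm_eq_abs, map_mul, map_pow]
      have h1 : Complex.abs q ^ k ≤ 1 := pow_le_one₀ (Complex.abs.nonneg q) hq.le
      nlinarith [Complex.abs.nonneg x]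
    have hb := Complex.norm_log_one_add_le hz
    have hzz : ‖-(x * q ^ k)‖ = Complex.abs x * Complex.abs q ^ k := by
      rw [norm_neg, Complex.norm_eq_abs, map_mul, map_pow]
    have h1a : (1 : ℂ) + -(x * q ^ k) = 1 - x * q ^ k := by ring
    rw [h1a] at hb
    rw [hzz] at hb
    set a := Complex.abs x * Complex.abs q ^ k with ha
    have ha1 : a ≤ Complex.abs x := by
      have h1 : Complex.abs q ^ k ≤ 1 := pow_le_one₀ (Complex.abs.nonneg q) hq.le
      rw [ha]; nlinarith [Complex.abs.nonneg x]
    have ha0 : 0 ≤ a := by positivity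
    have hinv : (1 - a)⁻¹ ≤ (1 - Complex.abs x)⁻¹ := inv_anti₀ (by linarith) (by linarith)
    have hx0 : (0:ℝ) ≤ (1 - Complex.abs x)⁻¹ := inv_nonneg.2 (by linarith)
    calc ‖Complex.log (1 - x * q ^ k)‖ ≤ a ^ 2 * (1 - a)⁻¹ / 2 + a := hb
      _ ≤ a * (Complex.abs x * (1 - Complex.abs x)⁻¹) / 2 + a := by
          have : a ^ 2 * (1 - a)⁻¹ ≤ a * (Complex.abs x * (1 - Complex.abs x)⁻¹) := by
            have h1 : a ^ 2 ≤ a * Complex.abs x := by nlinarith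
            have h2 : (0:ℝ) ≤ (1-a)⁻¹ := inv_nonneg.2 (by linarith)
            nlinarith [mul_le_mul_of_nonneg_left hinv (mul_nonneg ha0 (Complex.abs.nonneg x))]
          linarith
      _ = a * ((Complex.abs x * (1 - Complex.abs x)⁻¹) / 2 + 1) := by ring
      _ = C * Complex.abs q ^ k := by rw [hC, ha]; ring
  exact Complex.multipliable_of_summable_log hlog

lemma euler_identity (hq : Complex.abs q < 1) {x : ℂ} (hx : Complex.abs x < 1) :
    qPochInf x q * eulerE q x = 1 := by
  have hmul := multipliable_qPoch hq hx
  have ht1 : Filter.Tendsto (fun N : ℕ => qPoch x q N * eulerE q x) Filter.atTop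
      (nhds (qPochInf x q * eulerE q x)) := by
    apply Filter.Tendsto.mul_const
    exact hmul.hasProd.tendsto_prod_nat
  have ht2 : Filter.Tendsto (fun N : ℕ => qPoch x q N * eulerE q x) Filter.atTop (nhds 1) := by
    have := eulerE_tendsto_one hq hx
    apply this.congr
    intro N
    exact eulerE_iterate hq hx N
  exact tendsto_nhds_unique ht1 ht2

lemma one_sub_ne_zero_of_abs_lt {z : ℂ} (hz : Complex.abs z < 1) : (1 : ℂ) - z ≠ 0 := by
  intro h
  have : z = 1 := by linear_combination -h
  rw [this] at hz
  simp at hz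

lemma qPochInf_inv (hq : Complex.abs q < 1) {x : ℂ} (hx : Complex.abs x < 1) :
    (qPochInf x q)⁻¹ = eulerE q x :=
  (eq_inv_of_mul_eq_one_left (by rw [mul_comm]; exact euler_identity hq hx)).symm

end basic

set_option maxHeartbeats 1000000 in
theorem stmt14 (q t c : ℂ) (hq : ‖q‖ < 1) (ht : ‖t‖ < 1)
    (hcq : ‖c * q‖ < 1) (hc : c ≠ 1) :
    ∑' n : ℕ, t ^ (n + 1) / (qPoch q q (n + 1) * (1 - c * q ^ (n + 1)))
      = t / (1 - c) * ∑' n : ℕ, (1 - c ^ (n + 1)) * q ^ n / qPochInf (t * q ^ n) q := by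
  have hq : Complex.abs q < 1 := hq
  have ht : Complex.abs t < 1 := ht
  have hcq : Complex.abs (c * q) < 1 := hcq
  have habsq := Complex.abs.nonneg q
  have habst := Complex.abs.nonneg t
  have habsc := Complex.abs.nonneg c
  have hcq' : Complex.abs c * Complex.abs q < 1 := by rwa [← map_mul]
  have htqn : ∀ n : ℕ, Complex.abs (t * q ^ n) < 1 := by
    intro n
    rw [map_mul, map_pow]
    have h1 : Complex.abs q ^ n ≤ 1 := pow_le_one₀ habsq hq.le
    nlinarith
  have hqm1 : ∀ m : ℕ, Complex.abs (q ^ (m + 1)) < 1 := by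
    intro m
    rw [map_pow, pow_succ]
    have h1 : Complex.abs q ^ m ≤ 1 := pow_le_one₀ habsq hq.le
    nlinarith
  have hcqm1 : ∀ m : ℕ, Complex.abs (c * q ^ (m + 1)) < 1 := by
    intro m
    have : c * q ^ (m+1) = (c * q) * q ^ m := by ring
    rw [this, map_mul, map_pow]
    have h1 : Complex.abs q ^ m ≤ 1 := pow_le_one₀ habsq hq.le
    nlinarith [Complex.abs.nonneg (c * q)]
  set D := (Real.exp (-(Complex.abs q / (1 - Complex.abs q) ^ 2)))⁻¹ with hD
  have hD0 : 0 ≤ D := by positivity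
  -- the double family
  set f : ℕ → ℕ → ℂ := fun n m => (1 - c ^ (n+1)) * q ^ n * ((t * q ^ n) ^ m / qPoch q q m)
    with hf
  -- summability of the double family
  have hsumf : Summable (Function.uncurry f) := by
    apply Summable.of_norm_bounded (g := fun p : ℕ × ℕ => (Complex.abs q ^ p.1 + Complex.abs c * (Complex.abs c * Complex.abs q) ^ p.1)
        * (D * Complex.abs t ^ p.2))
    · have hA : Summable (fun n : ℕ => Complex.abs q ^ n
          + Complex.abs c * (Complex.abs c * Complex.abs q) ^ n) :=
        (summable_geometric_of_lt_one habsq hq).add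
          ((summable_geometric_of_lt_one (by positivity) hcq').mul_left _)
      have hB : Summable (fun m : ℕ => D * Complex.abs t ^ m) :=
        (summable_geometric_of_lt_one habst ht).mul_left _
      exact hA.mul_of_nonneg hB (fun n => by positivity) (fun m => by positivity)
    · rintro ⟨n, m⟩
      simp only [Function.uncurry, hf]
      rw [norm_mul, norm_mul, norm_div, Complex.norm_eq_abs, Complex.norm_eq_abs,
        Complex.norm_eq_abs, Complex.norm_eq_abs, map_pow, map_pow, map_mul, map_pow]
      have b1 : Complex.abs (1 - c ^ (n+1)) ≤ 1 + Complex.abs c ^ (n+1) := by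
        calc Complex.abs (1 - c ^ (n+1)) ≤ Complex.abs 1 + Complex.abs (c ^ (n+1)) :=
              Complex.abs.sub_le_add _ _
          _ = 1 + Complex.abs c ^ (n+1) := by rw [map_one, map_pow]
      have b2 : (Complex.abs t * Complex.abs q ^ n) ^ m ≤ Complex.abs t ^ m := by
        rw [mul_pow]
        have h1 : (Complex.abs q ^ n) ^ m ≤ 1 :=
          pow_le_one₀ (by positivity) (pow_le_one₀ habsq hq.le)
        nlinarith [pow_nonneg habst m, pow_nonneg (pow_nonneg habsq n) m]
      have b3 : (Complex.abs (qPoch q q m))⁻¹ ≤ D := inv_qPoch_le hq m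
      have b4 : (1 + Complex.abs c ^ (n+1)) * Complex.abs q ^ n
          = Complex.abs q ^ n + Complex.abs c * (Complex.abs c * Complex.abs q) ^ n := by
        rw [mul_pow, pow_succ]
        ring
      calc Complex.abs (1 - c ^ (n+1)) * Complex.abs q ^ n
            * ((Complex.abs t * Complex.abs q ^ n) ^ m / Complex.abs (qPoch q q m))
          ≤ (1 + Complex.abs c ^ (n+1)) * Complex.abs q ^ n * (Complex.abs t ^ m * D) := by
            rw [div_eq_mul_inv]
            have h0 : (0:ℝ) ≤ Complex.abs q ^ n := by positivity
            have h1 : (0:ℝ) ≤ (Complex.abs t * Complex.abs q ^ n) ^ m := by positivity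
            have h2 : (0:ℝ) ≤ Complex.abs (1 - c ^ (n+1)) := Complex.abs.nonneg _
            have h3 : (Complex.abs t * Complex.abs q ^ n) ^ m
                * (Complex.abs (qPoch q q m))⁻¹ ≤ Complex.abs t ^ m * D := by
              apply mul_le_mul b2 b3 (by positivity) (by positivity)
            have h4 : (0:ℝ) ≤ Complex.abs t ^ m * D := by positivity
            apply mul_le_mul (mul_le_mul b1 le_rfl h0 (by positivity)) h3 (by positivity)
              (by positivity)
        _ = (Complex.abs q ^ n + Complex.abs c * (Complex.abs c * Complex.abs q) ^ n)
            * (D * Complex.abs t ^ m) := by rw [← b4]; ring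
  -- inner geometric sums
  have hgeom : ∀ m : ℕ, ∑' n : ℕ, f n m
      = t ^ m / qPoch q q m * ((1 - q ^ (m+1))⁻¹ - c * (1 - c * q ^ (m+1))⁻¹) := by
    intro m
    have hterm : ∀ n : ℕ, f n m
        = t ^ m / qPoch q q m * ((q ^ (m+1)) ^ n - c * (c * q ^ (m+1)) ^ n) := by
      intro n
      rw [hf]
      simp only
      rw [mul_pow, ← pow_mul, ← pow_mul]
      field_simp
      ring
    rw [tsum_congr hterm, tsum_mul_left]
    congr 1
    rw [Summable.tsum_sub (summable_geometric_of_norm_lt_one (x := q ^ (m+1)) (by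
          rw [Complex.norm_eq_abs]; exact hqm1 m))
        (Summable.mul_left c (summable_geometric_of_norm_lt_one (x := c * q ^ (m+1)) (by
          rw [Complex.norm_eq_abs]; exact hcqm1 m))),
      tsum_geometric_of_norm_lt_one (by rw [Complex.norm_eq_abs]; exact hqm1 m),
      tsum_mul_left,
      tsum_geometric_of_norm_lt_one (by rw [Complex.norm_eq_abs]; exact hcqm1 m)]
  -- rewrite RHS sum
  have hrhs : ∑' n : ℕ, (1 - c ^ (n + 1)) * q ^ n / qPochInf (t * q ^ n) q
      = ∑' m : ℕ, ∑' n : ℕ, f n m := by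
    rw [Summable.tsum_comm hsumf]
    apply tsum_congr
    intro n
    rw [div_eq_mul_inv, qPochInf_inv hq (htqn n), eulerE, ← tsum_mul_left]
  rw [hrhs, tsum_congr hgeom, ← tsum_mul_left]
  apply tsum_congr
  intro m
  have h1c : (1 : ℂ) - c ≠ 0 := sub_ne_zero_of_ne (Ne.symm hc)
  have hpm : qPoch q q m ≠ 0 := qPoch_q_ne_zero hq m
  have hq1 : (1:ℂ) - q ^ (m+1) ≠ 0 := one_sub_ne_zero_of_abs_lt (hqm1 m)
  have hcq1 : (1:ℂ) - c * q ^ (m+1) ≠ 0 := one_sub_ne_zero_of_abs_lt (hcqm1 m)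
  have hstep : qPoch q q (m+1) = qPoch q q m * (1 - q ^ (m+1)) := by
    rw [qPoch, qPoch, Finset.prod_range_succ, ← pow_succ']
  rw [hstep]
  rw [show (1 - q ^ (m+1))⁻¹ - c * (1 - c * q ^ (m+1))⁻¹
      = (1 - c) / ((1 - q ^ (m+1)) * (1 - c * q ^ (m+1))) by
    rw [eq_div_iff (mul_ne_zero hq1 hcq1)]
    linear_combination (1 - c * q ^ (m+1)) * inv_mul_cancel₀ hq1 - c * (1 - q ^ (m+1)) * inv_mul_cancel₀ hcq1]
  field_simp
  ring
end

section
/- Let N and k be positive integers and let q, a, c ∈ ℂ with 0 < |q| < 1 and |cq| < 1. Then ∑_{n=0}^∞ c^n · C(k+n−1, n) · ( (aq^n;q)_N − 1 ) = ∑_{n=1}^∞ (−a)^n · q^{n(n−1)/2} · (q^{N−n+1};q)_n / ( (q;q)_n · (1 − cq^n)^k ), where the series on the right terminates: its terms vanish for n > N since (q^{N−n+1};q)_n contains the factor 1 − q^0 = 0. -/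
namespace Stmt19Aux

/-- shifted product ∏_{j<m} (1 - q^(e+j)) with integer exponents -/
noncomputable def Pz (q : ℂ) (e : ℤ) (m : ℕ) : ℂ :=
  ∏ j ∈ Finset.range m, (1 - q ^ (e + j))

lemma qPoch_zpow {q : ℂ} (hq : q ≠ 0) (e : ℤ) (m : ℕ) :
    qPoch (q ^ e) q m = Pz q e m := by
  refine Finset.prod_congr rfl fun j _ => ?_
  rw [zpow_add₀ hq, zpow_natCast]

lemma Pz_succ (q : ℂ) (e : ℤ) (m : ℕ) :
    Pz q e (m + 1) = Pz q e m * (1 - q ^ (e + m)) := Finset.prod_range_succ _ _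

lemma Pz_succ' (q : ℂ) (e : ℤ) (m : ℕ) :
    Pz q e (m + 1) = (1 - q ^ e) * Pz q (e + 1) m := by
  rw [Pz, Finset.prod_range_succ']
  simp only [Nat.cast_zero, add_zero, Pz]
  rw [mul_comm]
  congr 1
  refine Finset.prod_congr rfl fun j _ => ?_
  congr 2
  push_cast; ring

lemma Pz_eq_zero {q : ℂ} (e : ℤ) {m : ℕ} (he : e ≤ 0) (hm : -e < (m : ℤ)) :
    Pz q e m = 0 := by
  apply Finset.prod_eq_zero (i := (-e).toNat)
  · simp only [Finset.mem_range]
    omega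
  · have : e + ((-e).toNat : ℤ) = 0 := by omega
    rw [this, zpow_zero, sub_self]

/-- coefficient in the q-binomial theorem -/
noncomputable def qc (q : ℂ) (N m : ℕ) : ℂ :=
  (-1) ^ m * q ^ (m * (m - 1) / 2) * Pz q ((N : ℤ) - m + 1) m / qPoch q q m

lemma qc_zero (q : ℂ) (N : ℕ) : qc q N 0 = 1 := by
  simp [qc, Pz, qPoch]

lemma qc_top (q : ℂ) (N : ℕ) : qc q N (N + 1) = 0 := by
  rw [qc, Pz_eq_zero _ (by push_cast; omega) (by push_cast; omega)]
  simp

lemma qPoch_qq_succ (q : ℂ) (m : ℕ) :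
    qPoch q q (m + 1) = qPoch q q m * (1 - q ^ (m + 1)) := by
  rw [qPoch, Finset.prod_range_succ, qPoch, pow_succ]
  ring

lemma qc_rec {q : ℂ} (hq : q ≠ 0) (hD : ∀ m, qPoch q q m ≠ 0) (N m : ℕ) :
    qc q (N + 1) (m + 1) = qc q N (m + 1) - q ^ N * qc q N m := by
  have h1 : ((N + 1 : ℕ) : ℤ) - ((m + 1 : ℕ) : ℤ) + 1 = (N : ℤ) - m + 1 := by push_cast; ring
  have h2 : ((N : ℤ) - ((m + 1 : ℕ) : ℤ) + 1) = (N : ℤ) - m := by push_cast; ring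
  rw [qc, qc, qc, h1, h2, Pz_succ, Pz_succ']
  rw [show (N : ℤ) - m + 1 + (m : ℤ) = ((N + 1 : ℕ) : ℤ) by push_cast; ring, zpow_natCast]
  have hT : (m + 1) * (m + 1 - 1) / 2 = m * (m - 1) / 2 + m := by
    rcases m with _ | m
    · rfl
    · simp only [Nat.add_sub_cancel]
      have : (m + 1 + 1) * (m + 1) = (m + 1) * m + 2 * (m + 1) := by ring
      omega
  rw [hT, qPoch_qq_succ]
  set u := q ^ ((N : ℤ) - (m : ℤ)) with hu_def
  have hu : u * q ^ m = q ^ N := by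
    rw [hu_def, ← zpow_natCast q m, ← zpow_add₀ hq, ← zpow_natCast q N]
    congr 1; ring
  rw [show ((N : ℤ) - (m : ℤ)) + 1 = (N : ℤ) - m + 1 from rfl]
  rw [pow_succ q N, ← hu]
  have hDm := hD m
  have hE : (1 - q ^ (m + 1)) ≠ 0 := by
    have h := hD (m + 1)
    rw [qPoch_qq_succ] at h
    exact right_ne_zero_of_mul h
  field_simp
  ring

theorem qbinom {q : ℂ} (hq : q ≠ 0) (hD : ∀ m, qPoch q q m ≠ 0) (N : ℕ) (x : ℂ) :
    qPoch x q N = ∑ m ∈ Finset.range (N + 1), qc q N m * x ^ m := by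
  induction N with
  | zero => simp [qPoch, qc_zero]
  | succ N ih =>
    rw [qPoch, Finset.prod_range_succ, ← qPoch, ih]
    rw [Finset.sum_range_succ' (fun m => qc q (N+1) m * x ^ m) (N+1)]
    simp only [qc_zero, pow_zero, mul_one]
    have step : ∀ m ∈ Finset.range (N + 1),
        qc q (N+1) (m+1) * x ^ (m+1)
          = qc q N (m+1) * x ^ (m+1) - (q ^ N * x) * (qc q N m * x ^ m) := by
      intro m _
      rw [qc_rec hq hD]
      ring
    rw [Finset.sum_congr rfl step, Finset.sum_sub_distrib, ← Finset.mul_sum]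
    have hfirst : ∑ m ∈ Finset.range (N + 1), qc q N (m+1) * x ^ (m+1) + 1
        = ∑ m ∈ Finset.range (N + 1), qc q N m * x ^ m := by
      rw [Finset.sum_range_succ _ N, qc_top, Finset.sum_range_succ' (fun m => qc q N m * x ^ m) N]
      simp [qc_zero]
    calc (∑ m ∈ Finset.range (N + 1), qc q N m * x ^ m) * (1 - x * q ^ N)
        = (∑ m ∈ Finset.range (N + 1), qc q N m * x ^ m)
            - (q ^ N * x) * ∑ m ∈ Finset.range (N + 1), qc q N m * x ^ m := by ring
      _ = _ := by rw [← hfirst]; ring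

lemma negbinom (k : ℕ) {z : ℂ} (hz : ‖z‖ < 1) :
    HasSum (fun n : ℕ => ((k + 1 + n - 1).choose n : ℂ) * z ^ n) (1 / (1 - z) ^ (k + 1)) := by
  have h := hasSum_choose_mul_geometric_of_norm_lt_one (𝕜 := ℂ) k (r := z)
    hz
  convert h using 2 with n
  congr 2
  have : k + 1 + n - 1 = n + k := by omega
  rw [this, ← Nat.choose_symm (Nat.le_add_left k n)]
  rw [Nat.add_sub_cancel]

end Stmt19Aux

open Stmt19Aux in
theorem stmt19 (N k : ℕ) (hN : 1 ≤ N) (hk : 1 ≤ k) (q a c : ℂ)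
    (hq0 : 0 < ‖q‖) (hq1 : ‖q‖ < 1) (hcq : ‖c * q‖ < 1) :
    ∑' n : ℕ, c ^ n * (Nat.choose (k + n - 1) n : ℂ) * (qPoch (a * q ^ n) q N - 1)
      = ∑' n : ℕ, (-a) ^ (n + 1) * q ^ ((n + 1) * n / 2) *
          qPoch (q ^ ((N : ℤ) - (n : ℤ))) q (n + 1) /
          (qPoch q q (n + 1) * (1 - c * q ^ (n + 1)) ^ k) := by
  have hq : q ≠ 0 := by
    intro h; rw [h] at hq0; simp at hq0
  have habs : ∀ j : ℕ, ‖q ^ (j + 1)‖ < 1 := by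
    intro j
    rw [norm_pow]
    exact pow_lt_one₀ (norm_nonneg q) hq1 (by omega)
  have hD : ∀ m, qPoch q q m ≠ 0 := by
    intro m
    rw [qPoch]
    apply Finset.prod_ne_zero_iff.mpr
    intro j _
    intro h
    have : q * q ^ j = 1 := by linear_combination -h
    have : ‖q ^ (j + 1)‖ = 1 := by
      rw [pow_succ']; rw [this]; simp
    linarith [habs j]
  have hcqm : ∀ m : ℕ, ‖c * q ^ (m + 1)‖ < 1 := by
    intro m
    have : c * q ^ (m + 1) = (c * q) * q ^ m := by ring
    rw [this, norm_mul, norm_pow]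
    calc ‖c * q‖ * ‖q‖ ^ m
        ≤ ‖c * q‖ * 1 := by
          apply mul_le_mul_of_nonneg_left _ (norm_nonneg _)
          exact pow_le_one₀ (norm_nonneg q) hq1.le
      _ < 1 := by simpa using hcq
  have hden : ∀ m : ℕ, (1 - c * q ^ (m + 1)) ≠ 0 := by
    intro m h
    have h1 : c * q ^ (m + 1) = 1 := by linear_combination -h
    have h2 := hcqm m
    rw [h1] at h2
    simp at h2
  obtain ⟨k', rfl⟩ : ∃ k', k = k' + 1 := ⟨k - 1, by omega⟩
  -- termwise rewriting of LHS
  have hterm : ∀ n : ℕ,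
      c ^ n * ((k' + 1 + n - 1).choose n : ℂ) * (qPoch (a * q ^ n) q N - 1)
        = ∑ m ∈ Finset.range N, (qc q N (m + 1) * a ^ (m + 1)) *
            (((k' + 1 + n - 1).choose n : ℂ) * (c * q ^ (m + 1)) ^ n) := by
    intro n
    rw [qbinom hq hD N (a * q ^ n)]
    rw [Finset.sum_range_succ' (fun m => qc q N m * (a * q ^ n) ^ m) N]
    simp only [qc_zero, pow_zero, mul_one, add_sub_cancel_right]
    rw [Finset.mul_sum]
    refine Finset.sum_congr rfl fun m _ => ?_
    have hpow : (a * q ^ n) ^ (m + 1) = a ^ (m + 1) * (q ^ (m + 1)) ^ n := by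
      rw [mul_pow, ← pow_mul, ← pow_mul, Nat.mul_comm]
    rw [hpow]
    ring
  rw [tsum_congr hterm]
  have hsumm : ∀ m ∈ Finset.range N, Summable (fun n : ℕ =>
      (qc q N (m + 1) * a ^ (m + 1)) * (((k' + 1 + n - 1).choose n : ℂ) * (c * q ^ (m + 1)) ^ n)) :=
    fun m _ => ((negbinom k' (hcqm m)).summable).mul_left _
  rw [Summable.tsum_finsetSum hsumm]
  have hinner : ∀ m ∈ Finset.range N,
      (∑' n : ℕ, (qc q N (m + 1) * a ^ (m + 1)) *
          (((k' + 1 + n - 1).choose n : ℂ) * (c * q ^ (m + 1)) ^ n))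
        = (qc q N (m + 1) * a ^ (m + 1)) * (1 / (1 - c * q ^ (m + 1)) ^ (k' + 1)) := by
    intro m _
    rw [tsum_mul_left, (negbinom k' (hcqm m)).tsum_eq]
  rw [Finset.sum_congr rfl hinner]
  -- RHS is a finite sum
  have hvan : ∀ n ∉ Finset.range N,
      (-a) ^ (n + 1) * q ^ ((n + 1) * n / 2) *
          qPoch (q ^ ((N : ℤ) - (n : ℤ))) q (n + 1) /
          (qPoch q q (n + 1) * (1 - c * q ^ (n + 1)) ^ (k' + 1)) = 0 := by
    intro n hn
    rw [Finset.mem_range, not_lt] at hn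
    rw [qPoch_zpow hq, Pz_eq_zero _ (by omega) (by push_cast; omega)]
    simp
  rw [tsum_eq_sum hvan]
  refine Finset.sum_congr rfl fun n hn => ?_
  rw [Finset.mem_range] at hn
  rw [qPoch_zpow hq]
  have he : (N : ℤ) - (n : ℤ) = (N : ℤ) - ((n + 1 : ℕ) : ℤ) + 1 := by push_cast; ring
  rw [he, qc]
  have hT : (n + 1) * (n + 1 - 1) / 2 = (n + 1) * n / 2 := by simp
  rw [hT, neg_pow a (n + 1)]
  have hDn := hD (n + 1)
  have hEn : ((1 : ℂ) - c * q ^ (n + 1)) ^ (k' + 1) ≠ 0 := pow_ne_zero _ (hden n)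
  field_simp
end
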